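/- Let R = k[x_1,...,x_n], I a homogeneous ideal, and d a positive integer. Then for each i and each l ≥ 0, the graded Betti numbers satisfy β_{i,i+d+l}(R/I) = β_{i,i+d+l}(R/I_{≥d}); i.e., rows d and higher of the Betti diagrams of R/I and R/I_{≥d} coincide. -/

import Mathlib

open MvPolynomial Classical

/-- The degree-`e` graded piece of `R/I`, where `R = k[x_1,…,x_n]`. -/
noncomputable def gradedPiece (k : Type) [Field k] (n : ℕ)
    (I : Ideal (MvPolynomial (Fin n) k)) (e : ℕ) :
    Submodule k (MvPolynomial (Fin n) k ⧸ I) :=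
  (homogeneousSubmodule (Fin n) k e).map (Ideal.Quotient.mkₐ k I).toLinearMap

/-- The Hilbert function of `R/I`. -/
noncomputable def hilb (k : Type) [Field k] (n : ℕ)
    (I : Ideal (MvPolynomial (Fin n) k)) (t : ℕ) : ℕ :=
  Module.finrank k (gradedPiece k n I t)

/-- `I` is a homogeneous ideal. -/
def IsHomog {k : Type} [Field k] {n : ℕ} (I : Ideal (MvPolynomial (Fin n) k)) : Prop :=
  ∃ S : Set (MvPolynomial (Fin n) k),
    (∀ f ∈ S, ∃ e, f.IsHomogeneous e) ∧ I = Ideal.span S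

/-- The Koszul differential on `⊕_{S ⊆ {x_1,…,x_n}} R/I`  (the Koszul complex
on the variables tensored with `R/I`, with all homological pieces bundled together). -/
noncomputable def koszulD (k : Type) [Field k] (n : ℕ)
    (I : Ideal (MvPolynomial (Fin n) k)) :
    (Finset (Fin n) → (MvPolynomial (Fin n) k ⧸ I)) →ₗ[k]
      (Finset (Fin n) → (MvPolynomial (Fin n) k ⧸ I)) :=
  LinearMap.pi fun S =>
    ∑ t ∈ Sᶜ, ((-1 : ℤ) ^ (S.filter (fun u => u < t)).card) •
      ((LinearMap.mulLeft k (Ideal.Quotient.mk I (X t))).comp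
        (LinearMap.proj (insert t S)))

/-- The internal-degree-`j`, homological-degree-`i` piece of the Koszul complex of `R/I`:
functions supported on `i`-element subsets, with values in the graded piece of degree `j - i`. -/
noncomputable def koszulPiece (k : Type) [Field k] (n : ℕ)
    (I : Ideal (MvPolynomial (Fin n) k)) (i j : ℕ) :
    Submodule k (Finset (Fin n) → (MvPolynomial (Fin n) k ⧸ I)) :=
  Submodule.pi Set.univ fun S =>
    if S.card = i ∧ i ≤ j then gradedPiece k n I (j - i) else ⊥

/-- The graded Betti number `β_{ij}(R/I) = dim_k Tor_i(R/I, k)_j`, computed as the dimension of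
the homology of the Koszul complex of `R/I` in homological degree `i` and internal degree `j`. -/
noncomputable def betti (k : Type) [Field k] (n : ℕ)
    (I : Ideal (MvPolynomial (Fin n) k)) (i j : ℕ) : ℕ :=
  Module.finrank k ↥(koszulPiece k n I i j ⊓ LinearMap.ker (koszulD k n I))
    - Module.finrank k ↥((koszulPiece k n I (i + 1) j).map (koszulD k n I))

/-- `M_i(R/I)`, the maximal shift at homological step `i`. -/
noncomputable def maxShift (k : Type) [Field k] (n : ℕ)
    (I : Ideal (MvPolynomial (Fin n) k)) (i : ℕ) : ℕ :=
  sSup {j | betti k n I i j ≠ 0}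

/-- `m_i(R/I)`, the minimal shift at homological step `i`. -/
noncomputable def minShift (k : Type) [Field k] (n : ℕ)
    (I : Ideal (MvPolynomial (Fin n) k)) (i : ℕ) : ℕ :=
  sInf {j | betti k n I i j ≠ 0}

/-- The truncation `I_{≥ d}`: the ideal generated by all homogeneous elements of `I` of
degree at least `d`. -/
noncomputable def trunc {k : Type} [Field k] {n : ℕ} (I : Ideal (MvPolynomial (Fin n) k)) (d : ℕ) :
    Ideal (MvPolynomial (Fin n) k) :=
  Ideal.span {f | f ∈ I ∧ ∃ e, d ≤ e ∧ f.IsHomogeneous e}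

/-- `e` is the multiplicity (degree) of `R/I`: the total vector-space dimension in the
finite-length (Artinian) case, and the normalized leading coefficient of the Hilbert
polynomial otherwise. -/
noncomputable def IsMultiplicity (k : Type) [Field k] (n : ℕ)
    (I : Ideal (MvPolynomial (Fin n) k)) (e : ℚ) : Prop :=
  (∃ N, (∀ t, N ≤ t → hilb k n I t = 0) ∧
      e = ∑ t ∈ Finset.range N, (hilb k n I t : ℚ)) ∨
  ((¬ ∃ N, ∀ t, N ≤ t → hilb k n I t = 0) ∧
    ∃ P : Polynomial ℚ, P ≠ 0 ∧ (∃ N : ℕ, ∀ t : ℕ, N ≤ t → P.eval (t : ℚ) = (hilb k n I t : ℚ)) ∧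
      e = P.leadingCoeff * (P.natDegree).factorial)

/-- The multiplicity (= `dim_k R/I`) of an Artinian quotient `R/I`. -/
noncomputable def amult (k : Type) [Field k] (n : ℕ)
    (I : Ideal (MvPolynomial (Fin n) k)) : ℕ :=
  ∑ᶠ t : ℕ, hilb k n I t

theorem trunc_le' {k : Type} [Field k] {n : ℕ} (I : Ideal (MvPolynomial (Fin n) k)) (d : ℕ) :
    trunc I d ≤ I := by
  apply Ideal.span_le.2
  rintro f ⟨hf, -⟩
  exact hf

noncomputable def phiA (k : Type) [Field k] (n : ℕ) (I : Ideal (MvPolynomial (Fin n) k))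
    (d : ℕ) :
    (MvPolynomial (Fin n) k ⧸ trunc I d) →ₐ[k] (MvPolynomial (Fin n) k ⧸ I) :=
  Ideal.quotientMapₐ I (AlgHom.id k _) (trunc_le' I d)

theorem phiA_mk (k : Type) [Field k] (n : ℕ) (I : Ideal (MvPolynomial (Fin n) k)) (d : ℕ)
    (f : MvPolynomial (Fin n) k) :
    phiA k n I d (Ideal.Quotient.mk (trunc I d) f) = Ideal.Quotient.mk I f :=
  rfl

theorem map_phi_gradedPiece (k : Type) [Field k] (n : ℕ) (I : Ideal (MvPolynomial (Fin n) k))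
    (d e : ℕ) :
    (gradedPiece k n (trunc I d) e).map (phiA k n I d).toLinearMap = gradedPiece k n I e := by
  unfold gradedPiece
  rw [← Submodule.map_comp]
  have h : (phiA k n I d).toLinearMap ∘ₗ (Ideal.Quotient.mkₐ k (trunc I d)).toLinearMap
      = (Ideal.Quotient.mkₐ k I).toLinearMap := by
    apply LinearMap.ext
    intro f
    rfl
  rw [h]

theorem phi_inj_graded (k : Type) [Field k] (n : ℕ) (I : Ideal (MvPolynomial (Fin n) k))
    (d e : ℕ) (hde : d ≤ e) (x : MvPolynomial (Fin n) k ⧸ trunc I d)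
    (hx : x ∈ gradedPiece k n (trunc I d) e) (h0 : phiA k n I d x = 0) : x = 0 := by
  obtain ⟨f, hf, rfl⟩ := hx
  have h1 : Ideal.Quotient.mk I f = 0 := h0
  have hfI : f ∈ I := Ideal.Quotient.eq_zero_iff_mem.1 h1
  have hft : f ∈ trunc I d :=
    Ideal.subset_span ⟨hfI, e, hde, (mem_homogeneousSubmodule _ _).1 hf⟩
  show (Ideal.Quotient.mkₐ k (trunc I d)).toLinearMap f = 0
  exact Ideal.Quotient.eq_zero_iff_mem.2 hft

theorem koszulD_apply (k : Type) [Field k] (n : ℕ) (J : Ideal (MvPolynomial (Fin n) k))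
    (x : Finset (Fin n) → (MvPolynomial (Fin n) k ⧸ J)) (S : Finset (Fin n)) :
    koszulD k n J x S
      = ∑ t ∈ Sᶜ, ((-1 : ℤ) ^ (S.filter (fun u => u < t)).card) •
          (Ideal.Quotient.mk J (X t) * x (insert t S)) := by
  simp [koszulD, LinearMap.pi_apply, LinearMap.sum_apply, LinearMap.smul_apply,
    LinearMap.comp_apply, LinearMap.proj_apply, LinearMap.mulLeft_apply]

theorem koszulD_comm (k : Type) [Field k] (n : ℕ) (I : Ideal (MvPolynomial (Fin n) k)) (d : ℕ)
    (x : Finset (Fin n) → (MvPolynomial (Fin n) k ⧸ trunc I d)) :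
    koszulD k n I (((phiA k n I d).toLinearMap.compLeft (Finset (Fin n))) x)
      = ((phiA k n I d).toLinearMap.compLeft (Finset (Fin n))) (koszulD k n (trunc I d) x) := by
  funext S
  simp only [LinearMap.compLeft_apply, koszulD_apply, Function.comp_apply,
    AlgHom.toLinearMap_apply, map_sum, map_zsmul, map_mul, phiA_mk]

theorem mul_X_mem (k : Type) [Field k] (n : ℕ) (J : Ideal (MvPolynomial (Fin n) k)) (e : ℕ)
    (t : Fin n) (x : MvPolynomial (Fin n) k ⧸ J) (hx : x ∈ gradedPiece k n J e) :
    Ideal.Quotient.mk J (X t) * x ∈ gradedPiece k n J (e + 1) := by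
  obtain ⟨f, hf, rfl⟩ := hx
  refine ⟨X t * f, ?_, ?_⟩
  · have h := (isHomogeneous_X k t).mul ((mem_homogeneousSubmodule _ _).1 hf)
    rw [add_comm] at h
    exact (mem_homogeneousSubmodule _ _).2 h
  · simp [Ideal.Quotient.mkₐ_eq_mk, map_mul]

theorem koszulD_mem_piece (k : Type) [Field k] (n : ℕ) (J : Ideal (MvPolynomial (Fin n) k))
    (i j : ℕ) (x : Finset (Fin n) → (MvPolynomial (Fin n) k ⧸ J))
    (hx : x ∈ koszulPiece k n J i j) :
    koszulD k n J x ∈ koszulPiece k n J (i - 1) j := by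
  rw [koszulPiece, Submodule.mem_pi] at hx ⊢
  intro S _
  rw [koszulD_apply]
  apply Submodule.sum_mem
  intro t ht
  have hT := hx (insert t S) (Set.mem_univ _)
  by_cases hc : (insert t S).card = i ∧ i ≤ j
  · have hts : t ∉ S := by simpa using ht
    have hcard : (insert t S).card = S.card + 1 := Finset.card_insert_of_notMem hts
    rw [if_pos hc] at hT
    have hS : S.card = i - 1 ∧ i - 1 ≤ j := by omega
    rw [if_pos hS]
    have heq : j - (i - 1) = (j - i) + 1 := by omega
    rw [heq]
    exact (gradedPiece k n J (j - i + 1)).toAddSubgroup.zsmul_mem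
      (mul_X_mem k n J (j - i) t _ hT) _
  · rw [if_neg hc] at hT
    have hz : x (insert t S) = 0 := by simpa using hT
    simp [hz]

theorem map_compLeft_pi {k : Type} [Field k] {M N : Type} [AddCommGroup M] [AddCommGroup N]
    [Module k M] [Module k N] {ι : Type} (f : M →ₗ[k] N) (p : ι → Submodule k M) :
    (Submodule.pi Set.univ p).map (f.compLeft ι)
      = Submodule.pi Set.univ (fun i => (p i).map f) := by
  apply le_antisymm
  · intro y hy
    rw [Submodule.mem_map] at hy
    obtain ⟨x, hx, rfl⟩ := hy
    rw [Submodule.mem_pi] at hx ⊢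
    intro i _
    exact Submodule.mem_map_of_mem (hx i (Set.mem_univ _))
  · intro y hy
    rw [Submodule.mem_pi] at hy
    choose x hx1 hx2 using fun i => hy i (Set.mem_univ i)
    refine ⟨x, ?_, funext hx2⟩
    rw [SetLike.mem_coe, Submodule.mem_pi]
    exact fun i _ => hx1 i

theorem map_Phi_koszulPiece (k : Type) [Field k] (n : ℕ) (I : Ideal (MvPolynomial (Fin n) k))
    (d i j : ℕ) :
    (koszulPiece k n (trunc I d) i j).map ((phiA k n I d).toLinearMap.compLeft (Finset (Fin n)))
      = koszulPiece k n I i j := by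
  rw [koszulPiece, koszulPiece, map_compLeft_pi]
  congr 1
  funext S
  split_ifs with h
  · exact map_phi_gradedPiece k n I d (j - i)
  · exact Submodule.map_bot _

theorem Phi_inj (k : Type) [Field k] (n : ℕ) (I : Ideal (MvPolynomial (Fin n) k))
    (d i j : ℕ) (hij : d ≤ j - i)
    (x : Finset (Fin n) → (MvPolynomial (Fin n) k ⧸ trunc I d))
    (hx : x ∈ koszulPiece k n (trunc I d) i j)
    (h0 : ((phiA k n I d).toLinearMap.compLeft (Finset (Fin n))) x = 0) : x = 0 := by
  rw [koszulPiece, Submodule.mem_pi] at hx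
  funext S
  have hS := hx S (Set.mem_univ _)
  by_cases hc : S.card = i ∧ i ≤ j
  · rw [if_pos hc] at hS
    have h0S : phiA k n I d (x S) = 0 := congrFun h0 S
    exact phi_inj_graded k n I d (j - i) hij (x S) hS h0S
  · rw [if_neg hc] at hS
    exact (Submodule.mem_bot _).1 hS

theorem finrank_map_eq_of {k : Type} [Field k] {M N : Type} [AddCommGroup M] [AddCommGroup N]
    [Module k M] [Module k N] (f : M →ₗ[k] N) (p : Submodule k M)
    (h : ∀ x ∈ p, f x = 0 → x = 0) :
    Module.finrank k ↥(p.map f) = Module.finrank k ↥p := by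
  have hmem : ∀ x ∈ p, f x ∈ p.map f := fun x hx => Submodule.mem_map_of_mem hx
  let g : p →ₗ[k] p.map f := f.restrict hmem
  have hbij : Function.Bijective g := by
    constructor
    · rw [injective_iff_map_eq_zero]
      intro x hx0
      have hfx : f (x : M) = 0 := congrArg Subtype.val hx0
      exact Subtype.ext (h x x.2 hfx)
    · rintro ⟨y, x, hx, rfl⟩
      exact ⟨⟨x, hx⟩, rfl⟩
  exact ((LinearEquiv.ofBijective g hbij).finrank_eq).symm


/-- Lemma 4.3. For a homogeneous ideal `I ⊆ k[x_1,…,x_n]` and `d ≥ 1`,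
the graded Betti numbers satisfy `β_{i,i+d+l}(R/I) = β_{i,i+d+l}(R/I_{≥d})` for all `i` and
all `l ≥ 0`: rows `d` and higher of the two Betti diagrams coincide. -/
theorem stmt2 (k : Type) [Field k] (n : ℕ) (I : Ideal (MvPolynomial (Fin n) k))
    (hI : IsHomog I) (d : ℕ) (hd : 1 ≤ d) :
    ∀ (i l : ℕ), betti k n I i (i + d + l) = betti k n (trunc I d) i (i + d + l) := by
  intro i l
  set j := i + d + l with hj
  have hΦcomp : (phiA k n I d).toLinearMap.compLeft (Finset (Fin n)) ∘ₗ koszulD k n (trunc I d)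
      = koszulD k n I ∘ₗ (phiA k n I d).toLinearMap.compLeft (Finset (Fin n)) :=
    LinearMap.ext fun x => (koszulD_comm k n I d x).symm
  have hmapA : (koszulPiece k n (trunc I d) i j ⊓ LinearMap.ker (koszulD k n (trunc I d))).map
      ((phiA k n I d).toLinearMap.compLeft (Finset (Fin n)))
      = koszulPiece k n I i j ⊓ LinearMap.ker (koszulD k n I) := by
    apply le_antisymm
    · intro y hy
      rw [Submodule.mem_map] at hy
      obtain ⟨x, hx, rfl⟩ := hy
      rw [Submodule.mem_inf] at hx
      obtain ⟨hx1, hx2⟩ := hx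
      rw [Submodule.mem_inf]
      refine ⟨?_, ?_⟩
      · rw [← map_Phi_koszulPiece k n I d i j]
        exact Submodule.mem_map_of_mem hx1
      · rw [LinearMap.mem_ker] at hx2 ⊢
        rw [koszulD_comm k n I d x, hx2, map_zero]
    · intro y hy
      rw [Submodule.mem_inf] at hy
      obtain ⟨hy1, hy2⟩ := hy
      rw [← map_Phi_koszulPiece k n I d i j, Submodule.mem_map] at hy1
      obtain ⟨x, hx, rfl⟩ := hy1
      have hdx : koszulD k n (trunc I d) x ∈ koszulPiece k n (trunc I d) (i - 1) j :=
        koszulD_mem_piece k n (trunc I d) i j x hx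
      have h0 : ((phiA k n I d).toLinearMap.compLeft (Finset (Fin n)))
          (koszulD k n (trunc I d) x) = 0 := by
        rw [← koszulD_comm k n I d x]
        exact LinearMap.mem_ker.1 hy2
      have hdx0 : koszulD k n (trunc I d) x = 0 :=
        Phi_inj k n I d (i - 1) j (by omega) _ hdx h0
      exact Submodule.mem_map_of_mem ⟨hx, LinearMap.mem_ker.2 hdx0⟩
  have hA : Module.finrank k ↥(koszulPiece k n I i j ⊓ LinearMap.ker (koszulD k n I))
      = Module.finrank k
          ↥(koszulPiece k n (trunc I d) i j ⊓ LinearMap.ker (koszulD k n (trunc I d))) := by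
    rw [← hmapA]
    exact finrank_map_eq_of _ _ (fun x hx h0 => Phi_inj k n I d i j (by omega) x hx.1 h0)
  have hmapB : ((koszulPiece k n (trunc I d) (i + 1) j).map (koszulD k n (trunc I d))).map
      ((phiA k n I d).toLinearMap.compLeft (Finset (Fin n)))
      = (koszulPiece k n I (i + 1) j).map (koszulD k n I) := by
    rw [← Submodule.map_comp, hΦcomp, Submodule.map_comp, map_Phi_koszulPiece]
  have hB : Module.finrank k ↥((koszulPiece k n I (i + 1) j).map (koszulD k n I))
      = Module.finrank k
          ↥((koszulPiece k n (trunc I d) (i + 1) j).map (koszulD k n (trunc I d))) := by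
    rw [← hmapB]
    refine finrank_map_eq_of _ _ ?_
    intro x hx h0
    rw [Submodule.mem_map] at hx
    obtain ⟨x', hx', rfl⟩ := hx
    have hmem : koszulD k n (trunc I d) x' ∈ koszulPiece k n (trunc I d) (i + 1 - 1) j :=
      koszulD_mem_piece k n (trunc I d) (i + 1) j x' hx'
    exact Phi_inj k n I d (i + 1 - 1) j (by omega) _ hmem h0
  unfold betti
  rw [hA, hB]
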